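/- Numerical core of Lemma 2 (edge-releasing increases h): Let r ≥ 1 be a natural number, let a be a natural number, and let b : Fin r → ℕ satisfy a ≥ b i and b i ≥ 2 for every i. Then a·log₂ a + Σ_{i} (b i)·log₂(b i) < (a + r)·log₂(a + r) + Σ_{i} (b i − 1)·log₂(b i − 1) (as real numbers, with natural numbers cast to ℝ). This expresses that if a vertex u of degree a with a ≥ max_i b i receives r edges, each moved away from a vertex of degree b i ≥ 2, then Σ_v d(v)·log₂ d(v) strictly increases. -/

import Mathlib

open Real Finset

private noncomputable def F (x : ℝ) : ℝ := x * Real.log x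

/-- key: for reals 1 ≤ x ≤ y, F x - F (x-1) < F (y+1) - F y -/
private lemma F_key {x y : ℝ} (hx : 1 ≤ x) (hxy : x ≤ y) :
    F x - F (x - 1) < F (y + 1) - F y := by
  rcases eq_or_lt_of_le hxy with rfl | h
  · have h := Real.strictConvexOn_mul_log.slope_strict_mono_adjacent
      (Set.mem_Ici.mpr (by linarith : (0:ℝ) ≤ x - 1))
      (Set.mem_Ici.mpr (by linarith : (0:ℝ) ≤ x + 1))
      (by linarith : x - 1 < x) (by linarith : x < x + 1)
    rw [show x - (x-1) = 1 by ring, show x + 1 - x = 1 by ring, div_one, div_one] at h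
    exact h
  · have h1 := Real.strictConvexOn_mul_log.slope_strict_mono_adjacent
      (Set.mem_Ici.mpr (by linarith : (0:ℝ) ≤ x - 1))
      (Set.mem_Ici.mpr (by linarith : (0:ℝ) ≤ y))
      (by linarith : x - 1 < x) h
    have h2 := Real.strictConvexOn_mul_log.slope_strict_mono_adjacent
      (Set.mem_Ici.mpr (by linarith : (0:ℝ) ≤ x))
      (Set.mem_Ici.mpr (by linarith : (0:ℝ) ≤ y + 1))
      h (by linarith : y < y + 1)
    rw [show x - (x-1) = 1 by ring, div_one] at h1
    rw [show y + 1 - y = 1 by ring, div_one] at h2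
    have hxy' : 0 < y - x := by linarith
    have h3 : F x - F (x-1) < (F y - F x) / (y - x) := h1
    have h4 : F y - F x < (F (y+1) - F y) * (y - x) := by
      rwa [div_lt_iff₀ hxy'] at h2
    have h5 : (F y - F x) / (y - x) < F (y+1) - F y := by
      rwa [div_lt_iff₀ hxy']
    exact h3.trans h5

theorem stmt_4 (r : ℕ) (hr : 1 ≤ r) (a : ℕ) (b : Fin r → ℕ)
    (hab : ∀ i, b i ≤ a) (hb : ∀ i, 2 ≤ b i) :
    (a : ℝ) * Real.logb 2 a + ∑ i, (b i : ℝ) * Real.logb 2 (b i) <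
      ((a : ℝ) + (r : ℝ)) * Real.logb 2 ((a : ℝ) + (r : ℝ)) +
        ∑ i, ((b i : ℝ) - 1) * Real.logb 2 ((b i : ℝ) - 1) := by
  haveI : Nonempty (Fin r) := ⟨⟨0, hr⟩⟩
  have hlog : (0:ℝ) < Real.log 2 := Real.log_pos (by norm_num)
  have step : ∀ i : Fin r, F (b i) - F ((b i : ℝ) - 1) < F ((a:ℝ) + i + 1) - F ((a:ℝ) + i) := by
    intro i
    have hx : (1:ℝ) ≤ (b i : ℝ) := by exact_mod_cast (le_trans one_le_two (hb i))
    have hxy : (b i : ℝ) ≤ (a:ℝ) + i := by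
      have : (b i : ℝ) ≤ (a:ℝ) := by exact_mod_cast hab i
      have hi : (0:ℝ) ≤ (i : ℝ) := by positivity
      linarith
    exact F_key hx hxy
  have sum_lt : ∑ i, (F (b i) - F ((b i : ℝ) - 1)) <
      ∑ i : Fin r, (F ((a:ℝ) + i + 1) - F ((a:ℝ) + i)) :=
    Finset.sum_lt_sum_of_nonempty Finset.univ_nonempty (fun i _ => step i)
  have tele : ∑ i : Fin r, (F ((a:ℝ) + i + 1) - F ((a:ℝ) + i)) = F ((a:ℝ) + r) - F (a:ℝ) := by
    rw [Fin.sum_univ_eq_sum_range (fun k => F ((a:ℝ) + k + 1) - F ((a:ℝ) + k))]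
    have h := Finset.sum_range_sub (fun k : ℕ => F ((a:ℝ) + k)) r
    simp only [Nat.cast_zero, add_zero, Nat.cast_add, Nat.cast_one, ← add_assoc] at h
    exact h
  have key : F (a:ℝ) + ∑ i, F (b i) < F ((a:ℝ) + r) + ∑ i, F ((b i : ℝ) - 1) := by
    rw [Finset.sum_sub_distrib] at sum_lt
    rw [tele] at sum_lt
    linarith
  have conv : ∀ x : ℝ, x * Real.logb 2 x = F x / Real.log 2 := by
    intro x; simp [Real.logb, F]; ring
  simp only [conv]
  rw [← Finset.sum_div, ← Finset.sum_div, ← add_div, ← add_div]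
  exact (div_lt_div_iff_of_pos_right hlog).mpr key
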